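/- For n ∈ ℕ and x ≠ 0, the nth derivative of x^{−1} eˣ equals eˣ · Σ_{k=0}^{n} (−1)ᵏ (n!/(n−k)!) x^{−k−1}. -/

import Mathlib

noncomputable def Fn (n : ℕ) (x : ℝ) : ℝ :=
  Real.exp x * ∑ k ∈ Finset.range (n + 1),
    (-1 : ℝ) ^ k * ((n.factorial : ℝ) / ((n - k).factorial : ℝ)) * x ^ (-(k : ℤ) - 1)

lemma sum_id (n : ℕ) (x : ℝ) :
    ∑ k ∈ Finset.range (n + 2),
        (-1 : ℝ) ^ k * (((n+1).factorial : ℝ) / ((n + 1 - k).factorial : ℝ)) * x ^ (-(k : ℤ) - 1)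
    = (∑ k ∈ Finset.range (n + 1),
        (-1 : ℝ) ^ k * ((n.factorial : ℝ) / ((n - k).factorial : ℝ)) * x ^ (-(k : ℤ) - 1))
      + ∑ k ∈ Finset.range (n + 1),
        (-1 : ℝ) ^ k * ((n.factorial : ℝ) / ((n - k).factorial : ℝ))
          * ((-(k : ℤ) - 1) * x ^ (-(k : ℤ) - 1 - 1)) := by
  rw [Finset.sum_range_succ']
  have hsplit : ∀ k ∈ Finset.range (n + 1),
      (-1 : ℝ) ^ (k + 1) * (((n+1).factorial : ℝ) / ((n + 1 - (k + 1)).factorial : ℝ))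
          * x ^ (-((k + 1 : ℕ) : ℤ) - 1)
      = (-1 : ℝ) ^ k * ((n.factorial : ℝ) / ((n - k).factorial : ℝ))
          * ((-(k : ℤ) - 1) * x ^ (-(k : ℤ) - 1 - 1))
        + (-1 : ℝ) ^ (k + 1) * ((n.factorial : ℝ) * ((n - k : ℕ) : ℝ) / ((n - k).factorial : ℝ))
          * x ^ (-(k : ℤ) - 2) := by
    intro k hk
    rw [Finset.mem_range] at hk
    have hk' : k ≤ n := Nat.lt_succ_iff.mp hk
    have h1 : n + 1 - (k + 1) = n - k := by omega
    have h2 : (-((k + 1 : ℕ) : ℤ) - 1) = -(k : ℤ) - 2 := by push_cast; ring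
    have h3 : (-(k : ℤ) - 1 - 1) = -(k : ℤ) - 2 := by ring
    have h4 : ((n + 1).factorial : ℝ) = (n + 1) * n.factorial := by
      rw [Nat.factorial_succ]; push_cast; ring
    have h5 : ((n - k : ℕ) : ℝ) = (n : ℝ) - k := by
      rw [Nat.cast_sub hk']
    have h6 : ((n - k).factorial : ℝ) ≠ 0 := Nat.cast_ne_zero.mpr (n - k).factorial_ne_zero
    rw [h1, h2, h3, h4, h5]
    field_simp
    push_cast
    ring
  rw [Finset.sum_congr rfl hsplit, Finset.sum_add_distrib]
  have hlast : ∑ k ∈ Finset.range (n + 1),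
      (-1 : ℝ) ^ (k + 1) * ((n.factorial : ℝ) * ((n - k : ℕ) : ℝ) / ((n - k).factorial : ℝ))
        * x ^ (-(k : ℤ) - 2)
      + (-1 : ℝ) ^ 0 * (((n+1).factorial : ℝ) / ((n + 1 - 0).factorial : ℝ)) * x ^ (-((0 : ℕ) : ℤ) - 1)
      = ∑ k ∈ Finset.range (n + 1),
        (-1 : ℝ) ^ k * ((n.factorial : ℝ) / ((n - k).factorial : ℝ)) * x ^ (-(k : ℤ) - 1) := by
    rw [Finset.sum_range_succ]
    have hzero : ((n - n : ℕ) : ℝ) = 0 := by simp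
    rw [hzero]
    rw [Finset.sum_range_succ' (fun k => (-1 : ℝ) ^ k * ((n.factorial : ℝ) / ((n - k).factorial : ℝ)) * x ^ (-(k : ℤ) - 1)) n]
    have hterm : ∀ k ∈ Finset.range n,
        (-1 : ℝ) ^ (k + 1) * ((n.factorial : ℝ) * ((n - k : ℕ) : ℝ) / ((n - k).factorial : ℝ))
          * x ^ (-(k : ℤ) - 2)
        = (-1 : ℝ) ^ (k + 1) * ((n.factorial : ℝ) / ((n - (k + 1)).factorial : ℝ))
          * x ^ (-((k + 1 : ℕ) : ℤ) - 1) := by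
      intro k hk
      rw [Finset.mem_range] at hk
      have h1 : n - k = (n - (k + 1)) + 1 := by omega
      have h2 : ((n - k).factorial : ℝ) = ((n - k : ℕ) : ℝ) * ((n - (k + 1)).factorial : ℝ) := by
        rw [h1, Nat.factorial_succ]
        push_cast
        ring
      have h3 : (-((k + 1 : ℕ) : ℤ) - 1) = -(k : ℤ) - 2 := by push_cast; ring
      have h5 : ((n - k : ℕ) : ℝ) ≠ 0 := by
        simp only [ne_eq, Nat.cast_eq_zero]
        omega
      have h6 : ((n - (k+1)).factorial : ℝ) ≠ 0 := Nat.cast_ne_zero.mpr (n - (k+1)).factorial_ne_zero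
      rw [h2, h3]
      field_simp
    rw [Finset.sum_congr rfl hterm]
    have e1 : (((n+1).factorial : ℝ) / ((n + 1 - 0).factorial : ℝ)) = 1 := by
      rw [Nat.sub_zero]; exact div_self (Nat.cast_ne_zero.mpr (n+1).factorial_ne_zero)
    have e2 : ((n.factorial : ℝ) / ((n - 0).factorial : ℝ)) = 1 := by
      rw [Nat.sub_zero]; exact div_self (Nat.cast_ne_zero.mpr n.factorial_ne_zero)
    rw [e1, e2]
    ring
  calc ∑ k ∈ Finset.range (n + 1),
        ((-1 : ℝ) ^ k * ((n.factorial : ℝ) / ((n - k).factorial : ℝ))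
          * ((-(k : ℤ) - 1) * x ^ (-(k : ℤ) - 1 - 1)))
      + ∑ k ∈ Finset.range (n + 1),
        ((-1 : ℝ) ^ (k + 1) * ((n.factorial : ℝ) * ((n - k : ℕ) : ℝ) / ((n - k).factorial : ℝ))
          * x ^ (-(k : ℤ) - 2))
      + (-1 : ℝ) ^ 0 * (((n+1).factorial : ℝ) / ((n + 1 - 0).factorial : ℝ)) * x ^ (-((0 : ℕ) : ℤ) - 1)
      = ∑ k ∈ Finset.range (n + 1),
        ((-1 : ℝ) ^ k * ((n.factorial : ℝ) / ((n - k).factorial : ℝ))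
          * ((-(k : ℤ) - 1) * x ^ (-(k : ℤ) - 1 - 1)))
      + (∑ k ∈ Finset.range (n + 1),
        ((-1 : ℝ) ^ (k + 1) * ((n.factorial : ℝ) * ((n - k : ℕ) : ℝ) / ((n - k).factorial : ℝ))
          * x ^ (-(k : ℤ) - 2))
      + (-1 : ℝ) ^ 0 * (((n+1).factorial : ℝ) / ((n + 1 - 0).factorial : ℝ)) * x ^ (-((0 : ℕ) : ℤ) - 1)) := by ring
    _ = _ := by rw [hlast]; ring

lemma hasDeriv (n : ℕ) (x : ℝ) (hx : x ≠ 0) :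
    HasDerivAt (Fn n) (Fn (n + 1) x) x := by
  have hS : HasDerivAt (fun y : ℝ => ∑ k ∈ Finset.range (n + 1),
      (-1 : ℝ) ^ k * ((n.factorial : ℝ) / ((n - k).factorial : ℝ)) * y ^ (-(k : ℤ) - 1))
      (∑ k ∈ Finset.range (n + 1),
        (-1 : ℝ) ^ k * ((n.factorial : ℝ) / ((n - k).factorial : ℝ))
          * ((-(k : ℤ) - 1) * x ^ (-(k : ℤ) - 1 - 1))) x := by
    apply HasDerivAt.fun_sum
    intro k _
    have h := (hasDerivAt_zpow (-(k : ℤ) - 1) x (Or.inl hx)).const_mul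
      ((-1 : ℝ) ^ k * ((n.factorial : ℝ) / ((n - k).factorial : ℝ)))
    convert h using 2
    rfl
    push_cast
    ring
  have h := (Real.hasDerivAt_exp x).mul hS
  have h2 : Fn (n+1) x = Real.exp x * (∑ k ∈ Finset.range (n + 1),
      (-1 : ℝ) ^ k * ((n.factorial : ℝ) / ((n - k).factorial : ℝ)) * x ^ (-(k : ℤ) - 1))
      + Real.exp x * (∑ k ∈ Finset.range (n + 1),
        (-1 : ℝ) ^ k * ((n.factorial : ℝ) / ((n - k).factorial : ℝ))
          * ((-(k : ℤ) - 1) * x ^ (-(k : ℤ) - 1 - 1))) := by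
    unfold Fn
    rw [sum_id n x]
    ring
  rw [h2]
  exact h

theorem stmt6 (n : ℕ) (x : ℝ) (hx : x ≠ 0) :
    iteratedDeriv n (fun y => y⁻¹ * Real.exp y) x =
      Real.exp x * ∑ k ∈ Finset.range (n + 1),
        (-1 : ℝ) ^ k * ((n.factorial : ℝ) / ((n - k).factorial : ℝ)) * x ^ (-(k : ℤ) - 1) := by
  have key : ∀ (m : ℕ) (y : ℝ), y ≠ 0 → iteratedDeriv m (fun y => y⁻¹ * Real.exp y) y = Fn m y := by
    intro m
    induction m with
    | zero =>
      intro y hy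
      simp [Fn, iteratedDeriv_zero, mul_comm]
    | succ m ih =>
      intro y hy
      rw [iteratedDeriv_succ]
      have hev : iteratedDeriv m (fun y => y⁻¹ * Real.exp y) =ᶠ[nhds y] Fn m := by
        filter_upwards [isOpen_ne.mem_nhds hy] with z hz using ih z hz
      rw [hev.deriv_eq]
      exact (hasDeriv m y hy).deriv
  exact key n x hx
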